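/- The average value of the divisor factor NDF equals the reciprocal of the twin prime constant: (1/x) · ∑_{n=1}^{x} NDF(n) tends, as x → ∞, to ∏_{p odd prime} (p−1)²/(p(p−2)), which equals the reciprocal of the twin prime constant C₂ = ∏_{p odd prime} (1 − 1/(p−1)²). -/

import Mathlib

/-- The divisor factor for `N`: the product of `(p - 1)/(p - 2)` over all odd primes `p`
dividing `N` with `p ^ 2 ≤ N`; the empty product is `1`. -/
noncomputable def NDF (N : ℕ) : ℝ :=
  ∏ p ∈ N.primeFactors.filter (fun p => 2 < p ∧ p ^ 2 ≤ N), ((p : ℝ) - 1) / ((p : ℝ) - 2)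

open Finset Filter

namespace NDFaux

/-- weight `∏ 1/(p-2)` over prime factors -/
noncomputable def gg (d : ℕ) : ℝ := ∏ p ∈ d.primeFactors, (1 / ((p : ℝ) - 2))

/-- gg restricted to odd squarefree numbers -/
noncomputable def ww (d : ℕ) : ℝ := if Squarefree d ∧ Odd d then gg d else 0

/-- threshold `max 1 (max p² : p | d)` -/
def MM (d : ℕ) : ℕ := max 1 (d.primeFactors.sup (· ^ 2))

/-- number of multiples of `d` in `[MM d, x]` -/
def cnt (d x : ℕ) : ℕ := ((Finset.Icc 1 x).filter (fun n => d ∣ n ∧ MM d ≤ n)).card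

noncomputable def FF (x d : ℕ) : ℝ := ww d * ((cnt d x : ℝ) / (x : ℝ))

/-- the multiplicative limit function -/
noncomputable def LL (d : ℕ) : ℝ :=
  if Squarefree d ∧ Odd d then ∏ p ∈ d.primeFactors, (((p : ℝ) * ((p : ℝ) - 2)))⁻¹ else 0

lemma one_le_MM (d : ℕ) : 1 ≤ MM d := le_max_left _ _

lemma sq_le_MM {d p : ℕ} (hp : p ∈ d.primeFactors) : p ^ 2 ≤ MM d :=
  le_trans (Finset.le_sup (f := (· ^ 2)) hp) (le_max_right _ _)

lemma squarefree_prod_primes {A : Finset ℕ} (hA : ∀ p ∈ A, p.Prime) :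
    Squarefree (∏ p ∈ A, p) := by
  induction A using Finset.cons_induction with
  | empty => simpa using squarefree_one
  | cons a A ha ih =>
    rw [Finset.prod_cons]
    have hap : a.Prime := hA a (Finset.mem_cons_self a A)
    have hcop : a.Coprime (∏ p ∈ A, p) := by
      refine Nat.Coprime.prod_right fun q hq => ?_
      exact (Nat.coprime_primes hap (hA q (Finset.mem_cons_of_mem hq))).mpr
        (fun h => ha (h ▸ hq))
    exact (Nat.squarefree_mul hcop).mpr
      ⟨hap.prime.squarefree, ih fun p hp => hA p (Finset.mem_cons_of_mem hp)⟩

lemma odd_prod_primes {A : Finset ℕ} (hA : ∀ p ∈ A, p.Prime ∧ 2 < p) :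
    Odd (∏ p ∈ A, p) := by
  rw [← Nat.not_even_iff_odd, even_iff_two_dvd]
  intro h2
  have hne : (∏ p ∈ A, p) ≠ 0 :=
    Finset.prod_ne_zero_iff.mpr fun p hp => (hA p hp).1.ne_zero
  have : 2 ∈ (∏ p ∈ A, p).primeFactors := Nat.mem_primeFactors.mpr ⟨Nat.prime_two, h2, hne⟩
  rw [Nat.primeFactors_prod (fun p hp => (hA p hp).1)] at this
  exact absurd (hA 2 this).2 (lt_irrefl 2)

lemma three_le_of_mem {d p : ℕ} (hd : Odd d) (hp : p ∈ d.primeFactors) : 3 ≤ p := by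
  have hprime := Nat.prime_of_mem_primeFactors hp
  have hne : p ≠ 2 := by
    rintro rfl
    rw [← Nat.not_even_iff_odd] at hd
    exact hd ((even_iff_two_dvd).mpr (Nat.dvd_of_mem_primeFactors hp))
  have := hprime.two_le
  omega

/-- Step 1: NDF as a sum over divisors. -/
lemma ndf_eq (n : ℕ) (hn : n ≠ 0) :
    NDF n = ∑ d ∈ n.divisors, (if Squarefree d ∧ Odd d ∧ MM d ≤ n then gg d else 0) := by
  classical
  have hn1 : 1 ≤ n := Nat.one_le_iff_ne_zero.mpr hn
  set T := n.primeFactors.filter (fun p => 2 < p ∧ p ^ 2 ≤ n) with hT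
  have hmem : ∀ p ∈ T, p.Prime ∧ p ∣ n ∧ 2 < p ∧ p ^ 2 ≤ n := by
    intro p hp
    rw [hT, Finset.mem_filter, Nat.mem_primeFactors] at hp
    exact ⟨hp.1.1, hp.1.2.1, hp.2.1, hp.2.2⟩
  have step1 : NDF n = ∏ p ∈ T, (1 / ((p:ℝ) - 2) + 1) := by
    rw [NDF]
    refine Finset.prod_congr rfl fun p hp => ?_
    have h3 : 2 < p := (hmem p hp).2.2.1
    have h3r : (3:ℝ) ≤ (p:ℝ) := by exact_mod_cast h3
    have hne : ((p:ℝ) - 2) ≠ 0 := by linarith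
    field_simp
    ring
  rw [step1, Finset.prod_add]
  simp only [Finset.prod_const_one, mul_one]
  rw [← Finset.sum_filter]
  refine Finset.sum_nbij' (fun A => ∏ p ∈ A, p) (fun d => d.primeFactors) ?_ ?_ ?_ ?_ ?_
  · -- forward map lands in target
    intro A hA
    rw [Finset.mem_powerset] at hA
    have hAfacts : ∀ p ∈ A, p.Prime ∧ p ∣ n ∧ 2 < p ∧ p ^ 2 ≤ n := fun p hp => hmem p (hA hp)
    have hprimes : ∀ p ∈ A, p.Prime := fun p hp => (hAfacts p hp).1
    have hdvd : (∏ p ∈ A, p) ∣ n :=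
      Finset.prod_primes_dvd n (fun p hp => (hprimes p hp).prime) (fun p hp => (hAfacts p hp).2.1)
    have hsq : Squarefree (∏ p ∈ A, p) := squarefree_prod_primes hprimes
    have hodd : Odd (∏ p ∈ A, p) := odd_prod_primes fun p hp => ⟨(hAfacts p hp).1, (hAfacts p hp).2.2.1⟩
    have hMM : MM (∏ p ∈ A, p) ≤ n := by
      rw [MM, Nat.primeFactors_prod hprimes]
      refine max_le hn1 (Finset.sup_le fun p hp => (hAfacts p hp).2.2.2)
    rw [Finset.mem_filter, Nat.mem_divisors]
    exact ⟨⟨hdvd, hn⟩, hsq, hodd, hMM⟩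
  · -- backward map lands in powerset
    intro d hd
    rw [Finset.mem_filter, Nat.mem_divisors] at hd
    obtain ⟨⟨hdvd, -⟩, hsq, hodd, hMM⟩ := hd
    rw [Finset.mem_powerset]
    intro p hp
    have hprime := Nat.prime_of_mem_primeFactors hp
    have hpn : p ∣ n := (Nat.dvd_of_mem_primeFactors hp).trans hdvd
    have h3 : 3 ≤ p := three_le_of_mem hodd hp
    have hp2 : p ^ 2 ≤ n := le_trans (sq_le_MM hp) hMM
    rw [hT, Finset.mem_filter, Nat.mem_primeFactors]
    exact ⟨⟨hprime, hpn, hn⟩, by omega, hp2⟩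
  · -- left inverse
    intro A hA
    rw [Finset.mem_powerset] at hA
    exact Nat.primeFactors_prod fun p hp => (hmem p (hA hp)).1
  · -- right inverse
    intro d hd
    rw [Finset.mem_filter] at hd
    exact Nat.prod_primeFactors_of_squarefree hd.2.1
  · -- values agree
    intro A hA
    rw [Finset.mem_powerset] at hA
    rw [gg, Nat.primeFactors_prod fun p hp => (hmem p (hA hp)).1]

/-- Step 2: swap the sums. -/
lemma sum_eq (x : ℕ) :
    ∑ n ∈ Finset.Icc 1 x, NDF n = ∑ d ∈ Finset.Icc 1 x, ww d * (cnt d x : ℝ) := by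
  classical
  have h1 : ∀ n ∈ Finset.Icc 1 x, NDF n =
      ∑ d ∈ Finset.Icc 1 x, (if d ∣ n ∧ Squarefree d ∧ Odd d ∧ MM d ≤ n then gg d else 0) := by
    intro n hn
    rw [Finset.mem_Icc] at hn
    have hn0 : n ≠ 0 := by omega
    rw [ndf_eq n hn0]
    have hsub : n.divisors ⊆ Finset.Icc 1 x := by
      intro d hd
      rw [Nat.mem_divisors] at hd
      have h1 : 1 ≤ d := Nat.one_le_iff_ne_zero.mpr (fun h => hn0 (by simpa [h] using hd.1))
      have h2 : d ≤ n := Nat.le_of_dvd (by omega) hd.1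
      rw [Finset.mem_Icc]
      omega
    have hcong : ∀ d ∈ n.divisors,
        (if Squarefree d ∧ Odd d ∧ MM d ≤ n then gg d else 0)
          = (if d ∣ n ∧ Squarefree d ∧ Odd d ∧ MM d ≤ n then gg d else 0) := by
      intro d hd
      rw [Nat.mem_divisors] at hd
      refine (if_congr ?_ rfl rfl).symm
      simp [hd.1]
    have hvanish : ∀ d ∈ Finset.Icc 1 x, d ∉ n.divisors →
        (if d ∣ n ∧ Squarefree d ∧ Odd d ∧ MM d ≤ n then gg d else 0) = 0 := by
      intro d _ hnd
      rw [Nat.mem_divisors] at hnd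
      have hndvd : ¬ (d ∣ n) := fun hdvd => hnd ⟨hdvd, hn0⟩
      rw [if_neg (by tauto)]
    rw [Finset.sum_congr rfl hcong, Finset.sum_subset hsub hvanish]
  rw [Finset.sum_congr rfl h1, Finset.sum_comm]
  refine Finset.sum_congr rfl fun d _ => ?_
  by_cases hd : Squarefree d ∧ Odd d
  · have hstep : ∀ n ∈ Finset.Icc 1 x,
        (if d ∣ n ∧ Squarefree d ∧ Odd d ∧ MM d ≤ n then gg d else 0)
          = (if d ∣ n ∧ MM d ≤ n then gg d else 0) := by
      intro n _
      refine if_congr ?_ rfl rfl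
      tauto
    rw [Finset.sum_congr rfl hstep, ← Finset.sum_filter, Finset.sum_const]
    rw [ww, if_pos hd]
    show (cnt d x) • gg d = gg d * (cnt d x : ℝ)
    rw [nsmul_eq_mul, mul_comm]
  · have hzero : ∀ n ∈ Finset.Icc 1 x,
        (if d ∣ n ∧ Squarefree d ∧ Odd d ∧ MM d ≤ n then gg d else 0) = 0 := by
      intro n _
      rw [if_neg (by tauto)]
    rw [Finset.sum_congr rfl hzero, Finset.sum_const, smul_zero, ww, if_neg hd, zero_mul]

lemma FF_vanish {x d : ℕ} (hd : d ∉ Finset.Icc 1 x) : FF x d = 0 := by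
  rw [Finset.mem_Icc] at hd
  rcases Nat.eq_zero_or_pos d with rfl | hpos
  · have : ww 0 = 0 := by
      rw [ww, if_neg]
      rintro ⟨hsq, -⟩
      exact not_squarefree_zero hsq
    rw [FF, this, zero_mul]
  · have hdx : x < d := by omega
    have : cnt d x = 0 := by
      rw [cnt, Finset.card_eq_zero, Finset.filter_eq_empty_iff]
      intro n hn
      rw [Finset.mem_Icc] at hn
      rintro ⟨hdvd, -⟩
      have := Nat.le_of_dvd (by omega) hdvd
      omega
    rw [FF, this]
    simp

lemma avg_eq (x : ℕ) :
    (1 / (x : ℝ)) * ∑ n ∈ Finset.Icc 1 x, NDF n = ∑' d, FF x d := by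
  rw [sum_eq, Finset.mul_sum, tsum_eq_sum (s := Finset.Icc 1 x) (fun d hd => FF_vanish hd)]
  refine Finset.sum_congr rfl fun d _ => ?_
  rw [FF]
  ring

lemma gg_nonneg {d : ℕ} (h : Odd d) : 0 ≤ gg d := by
  refine Finset.prod_nonneg fun p hp => ?_
  have hprime := Nat.prime_of_mem_primeFactors hp
  have hne : p ≠ 2 := by
    rintro rfl
    rw [← Nat.not_even_iff_odd] at h
    exact h ((even_iff_two_dvd).mpr (Nat.dvd_of_mem_primeFactors hp))
  have h3 : 3 ≤ p := by
    have := hprime.two_le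
    omega
  have hlt : (0 : ℝ) < (p : ℝ) - 2 := by
    have : (3 : ℝ) ≤ (p : ℝ) := by exact_mod_cast h3
    linarith
  positivity

lemma ww_nonneg (d : ℕ) : 0 ≤ ww d := by
  unfold ww
  split
  · exact gg_nonneg (by tauto)
  · exact le_refl 0

lemma LL_eq_ww_div (d : ℕ) : LL d = ww d / (d : ℝ) := by
  by_cases h : Squarefree d ∧ Odd d
  · rw [LL, ww, if_pos h, if_pos h]
    have hd : ((d : ℕ) : ℝ) = ∏ p ∈ d.primeFactors, (p : ℝ) := by
      rw [← Nat.cast_prod, Nat.prod_primeFactors_of_squarefree h.1]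
    rw [hd, gg, ← Finset.prod_div_distrib]
    refine Finset.prod_congr rfl fun p hp => ?_
    have h3 : (3 : ℝ) ≤ (p : ℝ) := by exact_mod_cast three_le_of_mem h.2 hp
    have h1 : ((p : ℝ) - 2) ≠ 0 := by linarith
    have h2 : (p : ℝ) ≠ 0 := by linarith
    field_simp
  · rw [LL, ww, if_neg h, if_neg h, zero_div]

lemma LL_nonneg (d : ℕ) : 0 ≤ LL d := by
  rw [LL]
  split
  · refine Finset.prod_nonneg fun p hp => ?_
    rename_i h
    have h3 : (3 : ℝ) ≤ (p : ℝ) := by exact_mod_cast three_le_of_mem h.2 hp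
    have : (0:ℝ) < (p : ℝ) * ((p:ℝ) - 2) := by nlinarith
    positivity
  · exact le_refl 0

lemma sqrt_le_sub_two {y : ℝ} (hy : 5 ≤ y) : Real.sqrt y ≤ y - 2 := by
  have h1 : Real.sqrt y ≤ Real.sqrt ((y - 2) ^ 2) := Real.sqrt_le_sqrt (by nlinarith)
  rwa [Real.sqrt_sq (by linarith)] at h1

lemma rpow_three_half {y : ℝ} (hy : 0 < y) : y ^ (3/2 : ℝ) = y * Real.sqrt y := by
  rw [show (3/2 : ℝ) = 1 + 1/2 by norm_num, Real.rpow_add hy, Real.rpow_one,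
    ← Real.sqrt_eq_rpow]

lemma LL_le (d : ℕ) : LL d ≤ 2 * (((d : ℝ) ^ (3/2 : ℝ))⁻¹) := by
  by_cases h : Squarefree d ∧ Odd d
  · rw [LL, if_pos h]
    have hd : ((d : ℕ) : ℝ) = ∏ p ∈ d.primeFactors, (p : ℝ) := by
      rw [← Nat.cast_prod, Nat.prod_primeFactors_of_squarefree h.1]
    rw [hd, ← Real.finset_prod_rpow _ _ (fun p _ => by positivity) _,
      ← Finset.prod_inv_distrib]
    set s := d.primeFactors with hs
    have hpoint : ∀ p ∈ s, p ≠ 3 → ((p:ℝ) * ((p:ℝ) - 2))⁻¹ ≤ (((p:ℝ)) ^ (3/2 : ℝ))⁻¹ := by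
      intro p hp hp3
      have h3 : 3 ≤ p := three_le_of_mem h.2 hp
      have h4 : p ≠ 4 := by rintro rfl; exact absurd (Nat.prime_of_mem_primeFactors hp) (by norm_num)
      have h5 : 5 ≤ p := by omega
      have h5r : (5 : ℝ) ≤ (p : ℝ) := by exact_mod_cast h5
      have hpos : (0:ℝ) < (p:ℝ) := by linarith
      rw [rpow_three_half hpos]
      have hsq : Real.sqrt (p:ℝ) ≤ (p:ℝ) - 2 := sqrt_le_sub_two h5r
      have hsqpos : 0 < Real.sqrt (p:ℝ) := Real.sqrt_pos.mpr hpos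
      have : (p:ℝ) * Real.sqrt (p:ℝ) ≤ (p:ℝ) * ((p:ℝ) - 2) :=
        mul_le_mul_of_nonneg_left hsq (by linarith)
      have hpos2 : (0:ℝ) < (p:ℝ) * Real.sqrt (p:ℝ) := by positivity
      exact inv_anti₀ hpos2 this
    have hnn : ∀ p ∈ s, (0:ℝ) ≤ ((p:ℝ) * ((p:ℝ) - 2))⁻¹ := by
      intro p hp
      have h3 : (3:ℝ) ≤ (p:ℝ) := by exact_mod_cast three_le_of_mem h.2 hp
      have : (0:ℝ) < (p:ℝ) * ((p:ℝ) - 2) := by nlinarith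
      positivity
    have hnn2 : ∀ p ∈ s, (0:ℝ) ≤ (((p:ℝ)) ^ (3/2 : ℝ))⁻¹ := fun p _ => by positivity
    have key3 : (((3:ℕ):ℝ) * (((3:ℕ):ℝ) - 2))⁻¹ ≤ 2 * ((((3:ℕ):ℝ)) ^ (3/2 : ℝ))⁻¹ := by
      have hsqrt3 : Real.sqrt 3 ≤ 2 := by
        have h1 : Real.sqrt 3 ≤ Real.sqrt (2^2) := Real.sqrt_le_sqrt (by norm_num)
        rwa [Real.sqrt_sq (by norm_num : (0:ℝ) ≤ 2)] at h1
      have h6 : ((3:ℝ)) ^ (3/2 : ℝ) ≤ 6 := by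
        rw [rpow_three_half (by norm_num : (0:ℝ) < 3)]
        nlinarith [Real.sqrt_nonneg 3]
      have hpos : (0:ℝ) < ((3:ℝ)) ^ (3/2 : ℝ) := by positivity
      have h16 : (6:ℝ)⁻¹ ≤ (((3:ℝ)) ^ (3/2 : ℝ))⁻¹ := inv_anti₀ hpos h6
      push_cast
      norm_num
      linarith
    by_cases h3 : 3 ∈ s
    · rw [← Finset.mul_prod_erase s _ h3, ← Finset.mul_prod_erase s _ h3]
      have hP : ∏ p ∈ s.erase 3, ((p:ℝ) * ((p:ℝ) - 2))⁻¹
          ≤ ∏ p ∈ s.erase 3, (((p:ℝ)) ^ (3/2 : ℝ))⁻¹ := by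
        refine Finset.prod_le_prod (fun p hp => hnn p (Finset.mem_of_mem_erase hp))
          (fun p hp => hpoint p (Finset.mem_of_mem_erase hp) (Finset.ne_of_mem_erase hp))
      have hPnn : (0:ℝ) ≤ ∏ p ∈ s.erase 3, ((p:ℝ) * ((p:ℝ) - 2))⁻¹ :=
        Finset.prod_nonneg fun p hp => hnn p (Finset.mem_of_mem_erase hp)
      have h2nn : (0:ℝ) ≤ 2 * ((((3:ℕ):ℝ)) ^ (3/2 : ℝ))⁻¹ := by positivity
      calc (((3:ℕ):ℝ) * (((3:ℕ):ℝ) - 2))⁻¹ * ∏ p ∈ s.erase 3, ((p:ℝ) * ((p:ℝ) - 2))⁻¹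
          ≤ (2 * ((((3:ℕ):ℝ)) ^ (3/2 : ℝ))⁻¹) * ∏ p ∈ s.erase 3, (((p:ℝ)) ^ (3/2 : ℝ))⁻¹ :=
            mul_le_mul key3 hP hPnn h2nn
        _ = 2 * (((((3:ℕ):ℝ)) ^ (3/2 : ℝ))⁻¹ * ∏ p ∈ s.erase 3, (((p:ℝ)) ^ (3/2 : ℝ))⁻¹) := by
            ring
    · have := Finset.prod_le_prod hnn (fun p hp => hpoint p hp (fun he => h3 (he ▸ hp)))
      have hnn3 : (0:ℝ) ≤ ∏ p ∈ s, (((p:ℝ)) ^ (3/2 : ℝ))⁻¹ := Finset.prod_nonneg hnn2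
      linarith
  · rw [LL, if_neg h]
    positivity

lemma Icc_one_eq_Ioc (x : ℕ) : Finset.Icc 1 x = Finset.Ioc 0 x := by
  ext n; simp [Finset.mem_Icc, Finset.mem_Ioc, Nat.lt_iff_add_one_le]

lemma cnt_le_div (d x : ℕ) : cnt d x ≤ x / d := by
  unfold cnt
  rw [Icc_one_eq_Ioc, ← Nat.Ioc_filter_dvd_card_eq_div x d]
  refine Finset.card_le_card ?_
  intro n hn
  simp only [Finset.mem_filter] at hn ⊢
  exact ⟨hn.1, hn.2.1⟩

lemma cnt_div_le (d x : ℕ) (hd : d ≠ 0) : (cnt d x : ℝ) / (x : ℝ) ≤ 1 / (d : ℝ) := by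
  have hdpos : (0:ℝ) < (d:ℝ) := by
    have := Nat.pos_of_ne_zero hd
    exact_mod_cast this
  rcases Nat.eq_zero_or_pos x with rfl | hx
  · have : cnt d 0 = 0 := by simp [cnt]
    rw [this]
    simp
  · have hx0 : (0:ℝ) < (x:ℝ) := by exact_mod_cast hx
    have h1 : (cnt d x : ℝ) ≤ ((x / d : ℕ) : ℝ) := by exact_mod_cast cnt_le_div d x
    have h2 : ((x / d : ℕ) : ℝ) ≤ (x:ℝ) / (d:ℝ) := Nat.cast_div_le
    rw [div_le_div_iff₀ hx0 hdpos]
    have hle := h1.trans h2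
    have h4 := mul_le_mul_of_nonneg_right hle (le_of_lt hdpos)
    rw [div_mul_cancel₀ _ (ne_of_gt hdpos)] at h4
    linarith

lemma FF_le (x d : ℕ) : ‖FF x d‖ ≤ 2 * (((d : ℝ) ^ (3/2 : ℝ))⁻¹) := by
  by_cases h : Squarefree d ∧ Odd d
  · have hd0 : d ≠ 0 := h.1.ne_zero
    have hnn : 0 ≤ FF x d :=
      mul_nonneg (ww_nonneg d) (div_nonneg (by positivity) (by positivity))
    rw [Real.norm_of_nonneg hnn]
    calc FF x d = ww d * ((cnt d x : ℝ) / (x:ℝ)) := rfl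
      _ ≤ ww d * (1 / (d:ℝ)) :=
        mul_le_mul_of_nonneg_left (cnt_div_le d x hd0) (ww_nonneg d)
      _ = LL d := by rw [LL_eq_ww_div]; ring
      _ ≤ _ := LL_le d
  · have hww : ww d = 0 := if_neg h
    simp only [FF, hww, zero_mul, norm_zero]
    positivity

lemma cnt_eq (d x : ℕ) : cnt d x = x / d - (MM d - 1) / d := by
  have hm := one_le_MM d
  set a := MM d - 1 with ha
  have hcnt : cnt d x = ((Finset.Ioc a x).filter (d ∣ ·)).card := by
    unfold cnt
    congr 1
    ext n
    simp only [Finset.mem_filter, Finset.mem_Icc, Finset.mem_Ioc]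
    constructor
    · rintro ⟨⟨h1, h2⟩, hdvd, hMM⟩; exact ⟨⟨by omega, h2⟩, hdvd⟩
    · rintro ⟨⟨h1, h2⟩, hdvd⟩; exact ⟨⟨by omega, h2⟩, hdvd, by omega⟩
  rw [hcnt]
  rcases le_or_gt a x with hax | hax
  · have hsplit : Finset.Ioc 0 a ∪ Finset.Ioc a x = Finset.Ioc 0 x :=
      Finset.Ioc_union_Ioc_eq_Ioc (Nat.zero_le a) hax
    have hdisj : Disjoint ((Finset.Ioc 0 a).filter (d ∣ ·)) ((Finset.Ioc a x).filter (d ∣ ·)) := by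
      refine Disjoint.mono (Finset.filter_subset _ _) (Finset.filter_subset _ _) ?_
      rw [Finset.disjoint_left]
      intro n h1 h2
      simp only [Finset.mem_Ioc] at h1 h2
      omega
    have hx := Nat.Ioc_filter_dvd_card_eq_div x d
    rw [← hsplit, Finset.filter_union, Finset.card_union_of_disjoint hdisj,
      Nat.Ioc_filter_dvd_card_eq_div a d] at hx
    omega
  · have hempty : Finset.Ioc a x = ∅ := by
      rw [Finset.Ioc_eq_empty]
      omega
    rw [hempty]
    have : x / d ≤ a / d := Nat.div_le_div_right (le_of_lt hax)
    simp
    omega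

lemma tendsto_div_nat (d : ℕ) (hd : 0 < d) :
    Tendsto (fun x : ℕ => ((x / d : ℕ) : ℝ) / (x:ℝ)) atTop (nhds (1 / (d:ℝ))) := by
  have hd0 : (0:ℝ) < (d:ℝ) := by exact_mod_cast hd
  have key : ∀ x : ℕ, 1 ≤ x →
      1/(d:ℝ) - ((x % d : ℕ):ℝ)/((d:ℝ)*(x:ℝ)) = ((x / d : ℕ) : ℝ) / (x:ℝ) := by
    intro x hx
    have hx0 : (0:ℝ) < (x:ℝ) := by exact_mod_cast hx
    have hmod := Nat.div_add_mod x d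
    have hcast : (d:ℝ) * ((x/d : ℕ):ℝ) + ((x % d : ℕ):ℝ) = (x:ℝ) := by exact_mod_cast hmod
    field_simp
    nlinarith [hcast]
  have h2 : Tendsto (fun x : ℕ => ((x % d:ℕ):ℝ)/((d:ℝ)*(x:ℝ))) atTop (nhds 0) := by
    refine squeeze_zero' (Filter.Eventually.of_forall fun x => by positivity)
      ?_ tendsto_one_div_atTop_nhds_zero_nat
    filter_upwards [eventually_ge_atTop 1] with x hx
    have hx0 : (0:ℝ) < (x:ℝ) := by exact_mod_cast hx
    have hmod : ((x % d : ℕ):ℝ) ≤ (d:ℝ) := by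
      have : x % d ≤ d := le_of_lt (Nat.mod_lt x hd)
      exact_mod_cast this
    rw [div_le_div_iff₀ (by positivity) hx0]
    nlinarith
  have h3 : Tendsto (fun x : ℕ => 1/(d:ℝ) - ((x % d:ℕ):ℝ)/((d:ℝ)*(x:ℝ))) atTop
      (nhds (1/(d:ℝ) - 0)) := tendsto_const_nhds.sub h2
  rw [sub_zero] at h3
  refine h3.congr' ?_
  filter_upwards [eventually_ge_atTop 1] with x hx
  exact key x hx

lemma tendsto_cnt (d : ℕ) (hd : 0 < d) :
    Tendsto (fun x : ℕ => (cnt d x : ℝ)/(x:ℝ)) atTop (nhds (1/(d:ℝ))) := by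
  set a := MM d - 1 with ha
  have hEq : ∀ x : ℕ, a ≤ x →
      ((x/d:ℕ):ℝ)/(x:ℝ) - ((a/d:ℕ):ℝ)/(x:ℝ) = (cnt d x : ℝ)/(x:ℝ) := by
    intro x hx
    rw [cnt_eq, ← ha]
    have hle : a / d ≤ x / d := Nat.div_le_div_right hx
    rw [Nat.cast_sub hle]
    ring
  have h1 := tendsto_div_nat d hd
  have h2 := tendsto_const_div_atTop_nhds_zero_nat (((a/d : ℕ):ℝ))
  have h3 : Tendsto (fun x : ℕ => ((x/d:ℕ):ℝ)/(x:ℝ) - ((a/d:ℕ):ℝ)/(x:ℝ)) atTop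
      (nhds (1/(d:ℝ) - 0)) := h1.sub h2
  rw [sub_zero] at h3
  refine h3.congr' ?_
  filter_upwards [eventually_ge_atTop a] with x hx
  exact hEq x hx

lemma tendsto_FF (d : ℕ) : Tendsto (fun x => FF x d) atTop (nhds (LL d)) := by
  by_cases h : Squarefree d ∧ Odd d
  · have hd : 0 < d := Nat.pos_of_ne_zero h.1.ne_zero
    have h1 := (tendsto_cnt d hd).const_mul (ww d)
    rw [LL_eq_ww_div]
    have : ww d / (d:ℝ) = ww d * (1/(d:ℝ)) := by ring
    rw [this]
    exact h1
  · have hww : ww d = 0 := if_neg h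
    have hL : LL d = 0 := if_neg h
    simp only [FF, hww, zero_mul, hL]
    exact tendsto_const_nhds

lemma summable_bound : Summable (fun d : ℕ => 2 * (((d : ℝ) ^ (3/2 : ℝ))⁻¹)) :=
  (Real.summable_nat_rpow_inv.mpr (by norm_num)).mul_left 2

lemma summable_LL : Summable (fun d : ℕ => ‖LL d‖) := by
  refine summable_bound.of_nonneg_of_le (fun d => norm_nonneg _) fun d => ?_
  rw [Real.norm_of_nonneg (LL_nonneg d)]
  exact LL_le d

lemma LL_one : LL 1 = 1 := by
  rw [LL, if_pos ⟨squarefree_one, odd_one⟩]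
  simp

lemma LL_zero : LL 0 = 0 := by
  rw [LL, if_neg]
  rintro ⟨hsq, -⟩
  exact not_squarefree_zero hsq

lemma LL_mul {m n : ℕ} (hmn : Nat.Coprime m n) : LL (m * n) = LL m * LL n := by
  classical
  by_cases hm : Squarefree m ∧ Odd m
  · by_cases hn : Squarefree n ∧ Odd n
    · have hsq : Squarefree (m * n) := (Nat.squarefree_mul hmn).mpr ⟨hm.1, hn.1⟩
      have hodd : Odd (m * n) := Nat.odd_mul.mpr ⟨hm.2, hn.2⟩
      rw [LL, LL, LL, if_pos ⟨hsq, hodd⟩, if_pos hm, if_pos hn,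
        Nat.Coprime.primeFactors_mul hmn,
        Finset.prod_union (Nat.Coprime.disjoint_primeFactors hmn)]
    · have : ¬ (Squarefree (m * n) ∧ Odd (m * n)) := by
        rintro ⟨hsq, hodd⟩
        exact hn ⟨hsq.squarefree_of_dvd (dvd_mul_left n m), (Nat.odd_mul.mp hodd).2⟩
      have h0 : LL n = 0 := by rw [LL, if_neg hn]
      rw [h0, mul_zero, LL, if_neg this]
  · have : ¬ (Squarefree (m * n) ∧ Odd (m * n)) := by
      rintro ⟨hsq, hodd⟩
      exact hm ⟨hsq.squarefree_of_dvd (dvd_mul_right m n), (Nat.odd_mul.mp hodd).1⟩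
    have h0 : LL m = 0 := by rw [LL, if_neg hm]
    rw [h0, zero_mul, LL, if_neg this]

lemma LL_prime_pow (p : ℕ) (hp : p.Prime) : ∑' e : ℕ, LL (p ^ e) = 1 + LL p := by
  classical
  have hvanish : ∀ e : ℕ, e ∉ ({0, 1} : Finset ℕ) → LL (p ^ e) = 0 := by
    intro e he
    simp only [Finset.mem_insert, Finset.mem_singleton] at he
    push_neg at he
    rw [LL, if_neg]
    rintro ⟨hsq, -⟩
    rw [Nat.squarefree_pow_iff hp.ne_one he.1] at hsq
    exact he.2 hsq.2
  rw [tsum_eq_sum hvanish]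
  rw [show ({0, 1} : Finset ℕ) = insert 0 {1} from rfl,
    Finset.sum_insert (by simp), Finset.sum_singleton, pow_zero, pow_one, LL_one]

lemma LL_two : LL 2 = 0 := by
  rw [LL, if_neg]
  rintro ⟨-, hodd⟩
  rw [Nat.odd_iff] at hodd
  norm_num at hodd

lemma summable_LL' : Summable LL := summable_LL.of_norm

lemma euler_factor (p : ℕ) (hp : p.Prime) (h2 : 2 < p) :
    1 + LL p = ((p : ℝ) - 1) ^ 2 / ((p : ℝ) * ((p : ℝ) - 2)) := by
  have hodd : Odd p := hp.odd_of_ne_two (by omega)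
  have hsq : Squarefree p := hp.prime.squarefree
  rw [LL, if_pos ⟨hsq, hodd⟩, hp.primeFactors, Finset.prod_singleton]
  have h3 : (3 : ℝ) ≤ (p : ℝ) := by exact_mod_cast h2
  have hne1 : (p : ℝ) ≠ 0 := by linarith
  have hne2 : ((p : ℝ) - 2) ≠ 0 := by linarith
  field_simp
  ring

lemma euler : HasProd
    (fun p : {p : ℕ // p.Prime ∧ 2 < p} =>
      ((p.1 : ℝ) - 1) ^ 2 / ((p.1 : ℝ) * ((p.1 : ℝ) - 2))) (∑' d, LL d) := by
  have hP : HasProd (fun p : Nat.Primes => ∑' e : ℕ, LL ((p : ℕ) ^ e)) (∑' d, LL d) :=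
    EulerProduct.eulerProduct_hasProd LL_one (fun {m n} h => LL_mul h) summable_LL LL_zero
  have hP2 : HasProd (fun p : Nat.Primes => 1 + LL p) (∑' d, LL d) := by
    have hfun : (fun p : Nat.Primes => ∑' e : ℕ, LL ((p : ℕ) ^ e))
        = fun p : Nat.Primes => 1 + LL p := funext fun p => LL_prime_pow p.1 p.2
    rwa [hfun] at hP
  let emb : {p : ℕ // p.Prime ∧ 2 < p} → Nat.Primes := fun p => ⟨p.1, p.2.1⟩
  have hinj : Function.Injective emb := by
    intro a b hab
    have h : (a.1 : ℕ) = b.1 := congrArg (fun q : Nat.Primes => (q : ℕ)) hab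
    exact Subtype.ext h
  have hoff : ∀ q : Nat.Primes, q ∉ Set.range emb → 1 + LL (q : ℕ) = 1 := by
    intro q hq
    have h2 : (q : ℕ) = 2 := by
      by_contra hne
      have h2lt : 2 < (q : ℕ) := by
        have := q.2.two_le
        omega
      exact hq ⟨⟨q.1, q.2, h2lt⟩, rfl⟩
    rw [h2, LL_two, add_zero]
  have hP3 : HasProd ((fun q : Nat.Primes => 1 + LL (q : ℕ)) ∘ emb) (∑' d, LL d) :=
    (hinj.hasProd_iff hoff).mpr hP2
  have hfun2 : ((fun q : Nat.Primes => 1 + LL (q : ℕ)) ∘ emb)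
      = fun p : {p : ℕ // p.Prime ∧ 2 < p} =>
        ((p.1 : ℝ) - 1) ^ 2 / ((p.1 : ℝ) * ((p.1 : ℝ) - 2)) :=
    funext fun p => euler_factor p.1 p.2.1 p.2.2
  rwa [hfun2] at hP3

end NDFaux

open NDFaux in
theorem ndf_average_eq_inv_twin_prime_constant :
    Filter.Tendsto
      (fun x : ℕ => (1 / (x : ℝ)) * ∑ n ∈ Finset.Icc 1 x, NDF n) Filter.atTop
      (nhds (∏' p : {p : ℕ // p.Prime ∧ 2 < p},
        ((p.1 : ℝ) - 1) ^ 2 / ((p.1 : ℝ) * ((p.1 : ℝ) - 2)))) ∧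
    (∏' p : {p : ℕ // p.Prime ∧ 2 < p},
        ((p.1 : ℝ) - 1) ^ 2 / ((p.1 : ℝ) * ((p.1 : ℝ) - 2))) =
      (∏' p : {p : ℕ // p.Prime ∧ 2 < p}, (1 - 1 / ((p.1 : ℝ) - 1) ^ 2))⁻¹ := by
  have hA : (∑' d, LL d) = ∏' p : {p : ℕ // p.Prime ∧ 2 < p},
      ((p.1 : ℝ) - 1) ^ 2 / ((p.1 : ℝ) * ((p.1 : ℝ) - 2)) := euler.tprod_eq.symm
  constructor
  · rw [← hA]
    have : (fun x : ℕ => (1 / (x : ℝ)) * ∑ n ∈ Finset.Icc 1 x, NDF n)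
        = fun x : ℕ => ∑' d, FF x d := funext avg_eq
    rw [this]
    exact tendsto_tsum_of_dominated_convergence summable_bound tendsto_FF
      (Filter.Eventually.of_forall fun x => FF_le x)
  · have h1le : (1:ℝ) ≤ ∑' d, LL d := by
      have h := Summable.le_tsum summable_LL' 1 (fun j _ => LL_nonneg j)
      rwa [LL_one] at h
    have hA0 : (∑' d, LL d) ≠ 0 := by linarith
    have hinv : HasProd (fun p : {p : ℕ // p.Prime ∧ 2 < p} => (1 - 1 / ((p.1:ℝ) - 1) ^ 2))
        (∑' d, LL d)⁻¹ := by
      have heq : (fun p : {p : ℕ // p.Prime ∧ 2 < p} => (1 - 1 / ((p.1:ℝ) - 1) ^ 2))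
          = fun p : {p : ℕ // p.Prime ∧ 2 < p} =>
            (((p.1:ℝ) - 1) ^ 2 / ((p.1:ℝ) * ((p.1:ℝ) - 2)))⁻¹ := by
        funext p
        obtain ⟨p, hp, h2⟩ := p
        have h3 : (3:ℝ) ≤ (p:ℝ) := by exact_mod_cast h2
        have hne1 : ((p:ℝ) - 1) ≠ 0 := by linarith
        have hne2 : ((p:ℝ) - 2) ≠ 0 := by linarith
        have hne0 : (p:ℝ) ≠ 0 := by linarith
        field_simp
        ring
      rw [heq]
      have h := euler
      rw [HasProd] at h ⊢
      have h2 := h.inv₀ hA0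
      exact h2.congr fun s => (Finset.prod_inv_distrib _).symm
    rw [hinv.tprod_eq, inv_inv]
    exact hA.symm
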